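/- Let u : ℂ → ℂ be entire, not identically zero, with u''(z) = (i z³ − λ)·u(z) for all z. Suppose ζ ∈ A₁ and Re(u'(ζ)·conj(u(ζ))) = 0. Then for every t > 0: if ζ − t ∈ A₁ then Re(u'(ζ−t)·conj(u(ζ−t))) < 0, and if ζ + t ∈ A₁ then Re(u'(ζ+t)·conj(u(ζ+t))) > 0. -/

import Mathlib

open Complex Real ComplexConjugate

private lemma re_cubic (lam z : ℂ) :
    (Complex.I * z ^ 3 - lam).re = z.im ^ 3 - 3 * z.re ^ 2 * z.im - lam.re := by
  simp [pow_succ, Complex.mul_re, Complex.mul_im]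
  ring

private lemma A1_convex (lam ζ : ℂ) {a b s : ℝ} (has : a ≤ s) (hsb : s ≤ b)
    (hy : 0 < ζ.im)
    (ha : 0 < (Complex.I * (ζ + a) ^ 3 - lam).re)
    (hb : 0 < (Complex.I * (ζ + b) ^ 3 - lam).re) :
    0 < (Complex.I * (ζ + s) ^ 3 - lam).re := by
  rcases eq_or_lt_of_le (has.trans hsb) with h | h
  · have hsa : s = a := le_antisymm (h ▸ hsb) has
    rwa [hsa]
  · rw [re_cubic] at ha hb ⊢
    simp only [Complex.add_re, Complex.add_im, Complex.ofReal_re, Complex.ofReal_im,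
      add_zero] at *
    nlinarith [mul_nonneg (sub_nonneg.2 hsb) ha.le, mul_nonneg (sub_nonneg.2 has) hb.le,
      mul_nonneg (mul_nonneg (sub_nonneg.2 has) (sub_nonneg.2 hsb)) hy.le, h,
      mul_pos (sub_pos.2 h) ha, mul_pos (sub_pos.2 h) hb]

private lemma hasDerivAt_G (lam : ℂ) (u : ℂ → ℂ) (hu : Differentiable ℂ u)
    (hu' : Differentiable ℂ (deriv u))
    (hode : ∀ w : ℂ, iteratedDeriv 2 u w = (Complex.I * w ^ 3 - lam) * u w)
    (ζ : ℂ) (t : ℝ) :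
    HasDerivAt (fun s : ℝ => (deriv u (ζ + s) * conj (u (ζ + s))).re)
      ((Complex.I * (ζ + t) ^ 3 - lam).re * Complex.normSq (u (ζ + t))
        + Complex.normSq (deriv u (ζ + t))) t := by
  have hz : deriv (deriv u) (ζ + t) = (Complex.I * (ζ + t) ^ 3 - lam) * u (ζ + t) := by
    have := hode (ζ + (t : ℂ))
    rwa [iteratedDeriv_succ, iteratedDeriv_one] at this
  have h1 : HasDerivAt (fun s : ℝ => u (ζ + s)) (deriv u (ζ + t)) t := by
    have h : HasDerivAt (fun z : ℂ => u (ζ + z)) (deriv u (ζ + t)) (t : ℂ) := by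
      have := ((hu (ζ + t)).hasDerivAt).comp (t : ℂ)
        ((hasDerivAt_id (t : ℂ)).const_add ζ)
      rw [mul_one] at this
      exact this
    exact h.comp_ofReal
  have h2 : HasDerivAt (fun s : ℝ => deriv u (ζ + s))
      ((Complex.I * (ζ + t) ^ 3 - lam) * u (ζ + t)) t := by
    have h : HasDerivAt (fun z : ℂ => deriv u (ζ + z)) (deriv (deriv u) (ζ + t)) (t : ℂ) := by
      have := ((hu' (ζ + t)).hasDerivAt).comp (t : ℂ)
        ((hasDerivAt_id (t : ℂ)).const_add ζ)
      rw [mul_one] at this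
      exact this
    rw [hz] at h
    exact h.comp_ofReal
  have h3 : HasDerivAt (fun s : ℝ => conj (u (ζ + s))) (conj (deriv u (ζ + t))) t :=
    h1.star
  have h4 := h2.mul h3
  have h5 := Complex.reCLM.hasFDerivAt.comp_hasDerivAt t h4
  refine HasDerivAt.congr_deriv h5 ?_
  simp only [Complex.reCLM_apply, Function.comp, Complex.add_re, mul_assoc,
    Complex.mul_conj]
  simp [Complex.mul_re, Complex.ofReal_re, Complex.ofReal_im]

private lemma key_mono (lam : ℂ) (u : ℂ → ℂ)
    (hu : Differentiable ℂ u) (hu_ne : u ≠ 0)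
    (hode : ∀ w : ℂ, iteratedDeriv 2 u w = (Complex.I * w ^ 3 - lam) * u w)
    (ζ : ℂ) (hy : 0 < ζ.im) {a b : ℝ} (hab : a < b)
    (ha : 0 < (Complex.I * (ζ + a) ^ 3 - lam).re)
    (hb : 0 < (Complex.I * (ζ + b) ^ 3 - lam).re) :
    (deriv u (ζ + a) * conj (u (ζ + a))).re < (deriv u (ζ + b) * conj (u (ζ + b))).re := by
  have hu' : Differentiable ℂ (deriv u) := by
    have hA : AnalyticOnNhd ℂ u Set.univ := analyticOnNhd_univ_iff_differentiable.2 hu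
    exact analyticOnNhd_univ_iff_differentiable.1 hA.deriv
  set g : ℝ → ℝ := fun s => (deriv u (ζ + s) * conj (u (ζ + s))).re with hg
  set G : ℝ → ℝ := fun s => (Complex.I * (ζ + s) ^ 3 - lam).re * Complex.normSq (u (ζ + s))
      + Complex.normSq (deriv u (ζ + s)) with hG
  have hder : ∀ s : ℝ, HasDerivAt g (G s) s := fun s => hasDerivAt_G lam u hu hu' hode ζ s
  have hgderiv : ∀ s : ℝ, deriv g s = G s := fun s => (hder s).deriv
  have hGpos : ∀ s ∈ Set.Icc a b, 0 ≤ G s := by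
    intro s hs
    have hP := A1_convex lam ζ hs.1 hs.2 hy ha hb
    have := Complex.normSq_nonneg (u (ζ + s))
    have := Complex.normSq_nonneg (deriv u (ζ + s))
    positivity
  have hdiffg : Differentiable ℝ g := fun s => (hder s).differentiableAt
  have hmono : MonotoneOn g (Set.Icc a b) := by
    apply monotoneOn_of_deriv_nonneg (convex_Icc a b) hdiffg.continuous.continuousOn
      hdiffg.differentiableOn
    intro s hs
    rw [interior_Icc] at hs
    rw [hgderiv]
    exact hGpos s (Set.mem_Icc_of_Ioo hs)
  rcases lt_or_ge (g a) (g b) with h | h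
  · exact h
  -- otherwise g is constant on [a,b]; derive contradiction
  exfalso
  have hconst : ∀ s ∈ Set.Icc a b, g s = g a := by
    intro s hs
    refine le_antisymm ?_ (hmono (Set.left_mem_Icc.2 hab.le) hs hs.1)
    exact (hmono hs (Set.right_mem_Icc.2 hab.le) hs.2).trans h
  have hzero : ∀ s ∈ Set.Ioo a b, u (ζ + s) = 0 := by
    intro s hs
    have hloc : g =ᶠ[nhds s] fun _ => g a := by
      filter_upwards [Ioo_mem_nhds hs.1 hs.2] with x hx
      exact hconst x (Set.mem_Icc_of_Ioo hx)
    have h0 : HasDerivAt g 0 s := (hasDerivAt_const s (g a)).congr_of_eventuallyEq hloc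
    have hG0 : G s = 0 := by
      have := ((hder s).unique h0)
      simpa using this
    have hP := A1_convex lam ζ hs.1.le hs.2.le hy ha hb
    have h1 := Complex.normSq_nonneg (u (ζ + s))
    have h2 := Complex.normSq_nonneg (deriv u (ζ + s))
    have hG0' : (Complex.I * (ζ + s) ^ 3 - lam).re * Complex.normSq (u (ζ + s))
        + Complex.normSq (deriv u (ζ + s)) = 0 := by simpa [hG] using hG0
    have : Complex.normSq (u (ζ + s)) = 0 := by
      by_contra hne
      have : 0 < Complex.normSq (u (ζ + s)) := lt_of_le_of_ne h1 (Ne.symm hne)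
      nlinarith [mul_pos hP this]
    exact Complex.normSq_eq_zero.1 this
  -- accumulation of zeros ⇒ u ≡ 0
  set c : ℝ := (a + b) / 2 with hc
  set e : ℕ → ℝ := fun n => c + (b - a) / 3 * (1 / (n + 1)) with he
  have hmem : ∀ n : ℕ, e n ∈ Set.Ioo a b := by
    intro n
    have h1 : (0:ℝ) < 1 / ((n:ℝ) + 1) := by positivity
    have h2 : 1 / ((n:ℝ) + 1) ≤ 1 := by
      rw [div_le_one (by positivity)]; linarith [Nat.cast_nonneg (α := ℝ) n]
    constructor <;> simp only [he, hc] <;> nlinarith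
  have hne : ∀ n : ℕ, (ζ + (e n : ℂ)) ≠ ζ + (c : ℂ) := by
    intro n h
    have : (e n : ℂ) = (c : ℂ) := by
      have := add_left_cancel h; exact this
    have : e n = c := by exact_mod_cast this
    have h1 : (0:ℝ) < 1 / ((n:ℝ) + 1) := by positivity
    simp only [he] at this
    nlinarith
  have htend : Filter.Tendsto (fun n : ℕ => ζ + (e n : ℂ)) Filter.atTop (nhds (ζ + (c : ℂ))) := by
    have h1 : Filter.Tendsto e Filter.atTop (nhds c) := by
      have := tendsto_one_div_add_atTop_nhds_zero_nat (𝕜 := ℝ)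
      have h2 : Filter.Tendsto (fun n : ℕ => (b - a) / 3 * (1 / ((n:ℝ) + 1)))
          Filter.atTop (nhds 0) := by
        simpa using this.const_mul ((b - a) / 3)
      simpa [he, one_div] using h2.const_add c
    exact (Complex.continuous_ofReal.tendsto c).comp h1 |>.const_add ζ
  have htend' : Filter.Tendsto (fun n : ℕ => ζ + (e n : ℂ)) Filter.atTop
      (nhdsWithin (ζ + (c : ℂ)) {(ζ + (c : ℂ))}ᶜ) :=
    tendsto_nhdsWithin_of_tendsto_nhds_of_eventually_within _ htend
      (Filter.Eventually.of_forall fun n => hne n)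
  have hfreq : ∃ᶠ z in nhdsWithin (ζ + (c : ℂ)) {(ζ + (c : ℂ))}ᶜ, u z = 0 :=
    htend'.frequently (Filter.Frequently.of_forall fun n => hzero (e n) (hmem n))
  have hA : AnalyticOnNhd ℂ u Set.univ := analyticOnNhd_univ_iff_differentiable.2 hu
  have := hA.eqOn_zero_of_preconnected_of_frequently_eq_zero isPreconnected_univ
    (Set.mem_univ _) hfreq
  exact hu_ne (funext fun z => this (Set.mem_univ z))

/-- Let `u` be entire, not identically zero, with
`u''(z) = (iz³ - lam)·u(z)`.  Suppose `ζ ∈ A₁ = {z : Re(iz³-lam) > 0, Im z > 0}` and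
`Re(u'(ζ)·conj(u(ζ))) = 0`.  Then for every `t > 0`: if `ζ - t ∈ A₁` then
`Re(u'(ζ-t)·conj(u(ζ-t))) < 0`, and if `ζ + t ∈ A₁` then
`Re(u'(ζ+t)·conj(u(ζ+t))) > 0`. -/
theorem re_wronskian_monotone_on_A1
    (lam : ℂ) (u : ℂ → ℂ)
    (hu_entire : Differentiable ℂ u)
    (hu_ne : u ≠ 0)
    (hode : ∀ w : ℂ, iteratedDeriv 2 u w = (Complex.I * w ^ 3 - lam) * u w)
    (ζ : ℂ)
    (hζ : ζ ∈ {v : ℂ | 0 < (Complex.I * v ^ 3 - lam).re ∧ 0 < v.im})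
    (hzero : (deriv u ζ * conj (u ζ)).re = 0) :
    ∀ t : ℝ, 0 < t →
      ((ζ - t) ∈ {v : ℂ | 0 < (Complex.I * v ^ 3 - lam).re ∧ 0 < v.im} →
        (deriv u (ζ - t) * conj (u (ζ - t))).re < 0) ∧
      ((ζ + t) ∈ {v : ℂ | 0 < (Complex.I * v ^ 3 - lam).re ∧ 0 < v.im} →
        0 < (deriv u (ζ + t) * conj (u (ζ + t))).re) := by
  obtain ⟨hζ1, hζ2⟩ := hζ
  have h00 : ζ + ((0:ℝ) : ℂ) = ζ := by push_cast; ring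
  intro t ht
  constructor
  · intro hm
    obtain ⟨hm1, _⟩ := hm
    have hsub : ζ - (t : ℂ) = ζ + ((-t : ℝ) : ℂ) := by push_cast; ring
    rw [hsub] at hm1 ⊢
    have := key_mono lam u hu_entire hu_ne hode ζ hζ2 (a := -t) (b := 0)
      (by linarith) hm1 (by rw [h00]; exact hζ1)
    rw [h00] at this
    rwa [hzero] at this
  · intro hp
    obtain ⟨hp1, _⟩ := hp
    have := key_mono lam u hu_entire hu_ne hode ζ hζ2 (a := 0) (b := t)
      ht (by rw [h00]; exact hζ1) hp1
    rw [h00, hzero] at this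
    exact this
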